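/- If G is a graph without isolated vertices, then the Grundy domination number of G is at most the edge clique cover number of G, i.e., γ_gr(G) ≤ θ_e(G). -/

import Mathlib

open SimpleGraph

/-- The closed neighborhood of a vertex. -/
def closedNbhd {V : Type*} (G : SimpleGraph V) (v : V) : Set V :=
  insert v (G.neighborSet v)

/-- A legal (closed neighborhood) sequence: distinct vertices, each dominating
a vertex not dominated by its predecessors. -/
def IsLegalSeq {V : Type*} (G : SimpleGraph V) (l : List V) : Prop :=
  l.Nodup ∧ ∀ i : Fin l.length, ∃ u, u ∈ closedNbhd G (l.get i) ∧
    ∀ j : Fin l.length, (j : ℕ) < (i : ℕ) → u ∉ closedNbhd G (l.get j)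

/-- A dominating sequence: a legal sequence whose vertex set dominates the graph. -/
def IsDomSeq {V : Type*} (G : SimpleGraph V) (l : List V) : Prop :=
  IsLegalSeq G l ∧ ∀ v : V, ∃ u ∈ l, v ∈ closedNbhd G u

/-- The Grundy domination number: maximum length of a dominating sequence. -/
noncomputable def grundyDomNum {V : Type*} (G : SimpleGraph V) : ℕ :=
  sSup {n | ∃ l : List V, IsDomSeq G l ∧ l.length = n}

/-- A legal open neighborhood sequence. -/
def IsLegalOpenSeq {V : Type*} (G : SimpleGraph V) (l : List V) : Prop :=
  l.Nodup ∧ ∀ i : Fin l.length, ∃ u, u ∈ G.neighborSet (l.get i) ∧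
    ∀ j : Fin l.length, (j : ℕ) < (i : ℕ) → u ∉ G.neighborSet (l.get j)

/-- A total dominating sequence. -/
def IsTotalDomSeq {V : Type*} (G : SimpleGraph V) (l : List V) : Prop :=
  IsLegalOpenSeq G l ∧ ∀ v : V, ∃ u ∈ l, v ∈ G.neighborSet u

/-- The Grundy total domination number. -/
noncomputable def grundyTotalDomNum {V : Type*} (G : SimpleGraph V) : ℕ :=
  sSup {n | ∃ l : List V, IsTotalDomSeq G l ∧ l.length = n}

/-- The edge clique cover number: minimum size of a family of cliques covering all edges. -/
noncomputable def edgeCliqueCoverNum {V : Type*} (G : SimpleGraph V) : ℕ :=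
  sInf {n | ∃ C : Finset (Set V), C.card = n ∧ (∀ Q ∈ C, G.IsClique Q) ∧
    ∀ u v : V, G.Adj u v → ∃ Q ∈ C, u ∈ Q ∧ v ∈ Q}

/-- The independence number. -/
noncomputable def indepNum {V : Type*} (G : SimpleGraph V) : ℕ :=
  sSup {n | ∃ s : Finset V, (s : Set V).Pairwise (fun u v => ¬ G.Adj u v) ∧ s.card = n}

/-- The lexicographic product of simple graphs. -/
def lexProd {V W : Type*} (G : SimpleGraph V) (H : SimpleGraph W) : SimpleGraph (V × W) where
  Adj x y := G.Adj x.1 y.1 ∨ (x.1 = y.1 ∧ H.Adj x.2 y.2)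
  symm := by
    constructor
    rintro x y (h | ⟨e, h⟩)
    · exact Or.inl h.symm
    · exact Or.inr ⟨e.symm, h.symm⟩
  loopless := by
    constructor
    rintro x (h | ⟨_, h⟩)
    · exact G.loopless.irrefl _ h
    · exact H.loopless.irrefl _ h

/-- The strong product of simple graphs. -/
def strongProd {V W : Type*} (G : SimpleGraph V) (H : SimpleGraph W) : SimpleGraph (V × W) where
  Adj x y := x ≠ y ∧ (x.1 = y.1 ∨ G.Adj x.1 y.1) ∧ (x.2 = y.2 ∨ H.Adj x.2 y.2)
  symm := by
    constructor
    rintro x y ⟨hne, h1, h2⟩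
    refine ⟨hne.symm, ?_, ?_⟩
    · rcases h1 with h | h
      · exact Or.inl h.symm
      · exact Or.inr h.symm
    · rcases h2 with h | h
      · exact Or.inl h.symm
      · exact Or.inr h.symm
  loopless := ⟨fun x h => h.1 rfl⟩

/-- The direct (tensor) product of simple graphs. -/
def directProd {V W : Type*} (G : SimpleGraph V) (H : SimpleGraph W) : SimpleGraph (V × W) where
  Adj x y := G.Adj x.1 y.1 ∧ H.Adj x.2 y.2
  symm := ⟨fun _ _ h => ⟨h.1.symm, h.2.symm⟩⟩
  loopless := ⟨fun x h => G.loopless.irrefl _ h.1⟩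

/-- The boundary of a set of vertices. -/
def boundarySet {V : Type*} (G : SimpleGraph V) (S : Set V) : Set V :=
  {u | u ∉ S ∧ ∃ s ∈ S, G.Adj u s}

/-- `aVal G l` is the number of entries of `l` not adjacent to any earlier entry. -/
def aVal {V : Type*} (G : SimpleGraph V) [DecidableRel G.Adj] (l : List V) : ℕ :=
  (Finset.univ.filter (fun i : Fin l.length =>
    ∀ j : Fin l.length, (j : ℕ) < (i : ℕ) → ¬ G.Adj (l.get j) (l.get i))).card

theorem stmt_0 {V : Type*} [Fintype V] (G : SimpleGraph V)
    (h : ∀ v : V, ∃ u : V, G.Adj v u) :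
    grundyDomNum G ≤ edgeCliqueCoverNum G := by
  classical
  have hT : {n | ∃ C : Finset (Set V), C.card = n ∧ (∀ Q ∈ C, G.IsClique Q) ∧
      ∀ u v : V, G.Adj u v → ∃ Q ∈ C, u ∈ Q ∧ v ∈ Q}.Nonempty := by
    refine ⟨_, G.edgeFinset.image (fun e => {x | x ∈ e}), rfl, ?_, ?_⟩
    · intro Q hQ
      simp only [Finset.mem_image] at hQ
      obtain ⟨e, he, rfl⟩ := hQ
      induction e with
      | h a b =>
        intro x hx y hy hxy
        simp only [Set.mem_setOf_eq, Sym2.mem_iff] at hx hy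
        rw [SimpleGraph.mem_edgeFinset, SimpleGraph.mem_edgeSet] at he
        rcases hx with rfl | rfl <;> rcases hy with rfl | rfl
        · exact absurd rfl hxy
        · exact he
        · exact he.symm
        · exact absurd rfl hxy
    · intro a b hab
      exact ⟨{x | x ∈ s(a, b)}, Finset.mem_image_of_mem _ (by simpa using hab),
        by simp, by simp⟩
  obtain ⟨C, hCcard, hCclique, hCcov⟩ := Nat.sInf_mem hT
  rw [grundyDomNum, edgeCliqueCoverNum]
  refine csSup_le' ?_
  rintro k ⟨l, ⟨⟨hnd, hleg⟩, hdom⟩, rfl⟩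
  choose u hu hmin using hleg
  have hQ : ∀ i : Fin l.length, ∃ Q ∈ C, l.get i ∈ Q ∧ u i ∈ Q := by
    intro i
    rcases (Set.mem_insert_iff.mp (hu i)) with h1 | h1
    · obtain ⟨w, hw⟩ := h (l.get i)
      obtain ⟨Q, hQC, hQ1, hQ2⟩ := hCcov _ _ hw
      exact ⟨Q, hQC, hQ1, h1 ▸ hQ1⟩
    · obtain ⟨Q, hQC, hQ1, hQ2⟩ := hCcov _ _ h1
      exact ⟨Q, hQC, hQ1, hQ2⟩
  choose Q hQC hQv hQu using hQ
  have hinj : ∀ i j : Fin l.length, (i : ℕ) < (j : ℕ) → Q i ≠ Q j := by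
    intro i j hij heq
    apply hmin j i hij
    have h1 : u j ∈ Q i := heq ▸ hQu j
    by_cases hcase : u j = l.get i
    · exact hcase ▸ Set.mem_insert _ _
    · exact Set.mem_insert_of_mem _ (hCclique _ (hQC i) (hQv i) h1 (Ne.symm hcase))
  have hlen : l.length = (Finset.univ : Finset (Fin l.length)).card := by simp
  rw [hlen]
  calc (Finset.univ : Finset (Fin l.length)).card ≤ C.card := by
        apply Finset.card_le_card_of_injOn Q (fun i _ => hQC i)
        intro i _ j _ hij
        rcases lt_trichotomy (i : ℕ) (j : ℕ) with hlt | heq | hgt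
        · exact absurd hij (hinj i j hlt)
        · exact Fin.ext heq
        · exact absurd hij.symm (hinj j i hgt)
    _ = _ := hCcard
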